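/- Let f : V₁ → V₂ and g : W₁ → W₂ be strictly completely continuous (scc) bounded K-linear maps of K-Banach spaces, i.e., each is a limit in operator norm of bounded maps with finite-rank image. Then the completed tensor product map f ⊗̂ g : V₁ ⊗̂_K W₁ → V₂ ⊗̂_K W₂ is also strictly completely continuous. -/

import Mathlib

/-- A bounded map of Banach spaces is strictly completely continuous (scc) if it
is a limit in operator norm of bounded maps with finite-dimensional image. -/
def IsSCC {K E F : Type} [NontriviallyNormedField K]
    [NormedAddCommGroup E] [NormedSpace K E]
    [NormedAddCommGroup F] [NormedSpace K F] (h : E →L[K] F) : Prop :=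
  ∀ ε : ℝ, 0 < ε → ∃ h' : E →L[K] F,
    FiniteDimensional K (LinearMap.range (h' : E →ₗ[K] F)) ∧ ‖h - h'‖ ≤ ε


open UniformSpace UniformSpace.Completion Filter

section Completable

variable (K : Type) [NontriviallyNormedField K]

theorem myCompletableTopField : CompletableTopField K := by
  constructor
  intro F hF hbot
  obtain ⟨U, hU, V, hV, hUV⟩ := inf_eq_bot_iff.mp hbot
  obtain ⟨ε, hε, hball⟩ := Metric.mem_nhds_iff.mp hU
  have hVn : ∀ x ∈ V, ε ≤ ‖x‖ := by
    intro x hx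
    by_contra h
    push_neg at h
    have hxU : x ∈ U := hball (by simpa [Metric.mem_ball, dist_zero_right] using h)
    exact Set.eq_empty_iff_forall_notMem.mp hUV x ⟨hxU, hx⟩
  rw [Metric.cauchy_iff] at hF ⊢
  obtain ⟨hne, hsmall⟩ := hF
  refine ⟨hne.map _, fun δ hδ => ?_⟩
  obtain ⟨t, ht, htt⟩ := hsmall (δ * ε ^ 2) (by positivity)
  refine ⟨(fun x => x⁻¹) '' (t ∩ V), image_mem_map (inter_mem ht hV), ?_⟩
  rintro _ ⟨x, ⟨hxt, hxV⟩, rfl⟩ _ ⟨y, ⟨hyt, hyV⟩, rfl⟩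
  have hxn := hVn x hxV
  have hyn := hVn y hyV
  have hx0 : x ≠ 0 := by rintro rfl; simp only [norm_zero] at hxn; linarith
  have hy0 : y ≠ 0 := by rintro rfl; simp only [norm_zero] at hyn; linarith
  have key : x⁻¹ - y⁻¹ = x⁻¹ * (y - x) * y⁻¹ := by field_simp
  have hd : ‖y - x‖ < δ * ε ^ 2 := by
    rw [← dist_eq_norm]; exact htt y hyt x hxt
  rw [dist_eq_norm, key, norm_mul, norm_mul, norm_inv, norm_inv]
  have hxp : (0:ℝ) < ‖x‖ := lt_of_lt_of_le hε hxn
  have hyp : (0:ℝ) < ‖y‖ := lt_of_lt_of_le hε hyn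
  calc ‖x‖⁻¹ * ‖y - x‖ * ‖y‖⁻¹ ≤ ε⁻¹ * ‖y - x‖ * ε⁻¹ := by gcongr
    _ < ε⁻¹ * (δ * ε ^ 2) * ε⁻¹ := by gcongr <;> positivity
    _ = δ := by rw [sq]; field_simp

end Completable

section Hat

variable (K : Type) [NontriviallyNormedField K]
variable (M : Type) [NormedAddCommGroup M] [NormedSpace K M] [CompleteSpace M]

/-- Scalar multiplication by elements of the completion of `K`, as extension of
`k ↦ k • m`. -/
noncomputable def hatSmul (m : M) : Completion K →L[K] M :=
  (ContinuousLinearMap.toSpanSingleton K m).extend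
    (toComplL : K →L[K] Completion K)

variable {K M}

theorem hatSmul_coe (m : M) (k : K) : hatSmul K M m (k : Completion K) = k • m :=
  (ContinuousLinearMap.extend_eq _ denseRange_coe (isUniformInducing_coe K) k).trans
    (ContinuousLinearMap.toSpanSingleton_apply K m k)

theorem hatSmul_norm (m : M) (c : Completion K) : ‖hatSmul K M m c‖ ≤ ‖c‖ * ‖m‖ := by
  refine Completion.induction_on c
    (isClosed_le ((hatSmul K M m).continuous.norm)
      ((continuous_norm.mul continuous_const))) fun k => ?_
  rw [hatSmul_coe, Completion.norm_coe, norm_smul]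

theorem hatSmul_add (m m' : M) (c : Completion K) :
    hatSmul K M (m + m') c = hatSmul K M m c + hatSmul K M m' c := by
  refine Completion.induction_on c
    (isClosed_eq ((hatSmul K M (m + m')).continuous)
      (((hatSmul K M m).continuous).add ((hatSmul K M m').continuous))) fun k => ?_
  simp only [hatSmul_coe, smul_add]

theorem hatSmul_smulK (k' : K) (m : M) (c : Completion K) :
    hatSmul K M (k' • m) c = k' • hatSmul K M m c := by
  refine Completion.induction_on c
    (isClosed_eq ((hatSmul K M (k' • m)).continuous)
      (((hatSmul K M m).continuous).const_smul k')) fun k => ?_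
  simp only [hatSmul_coe, smul_comm k k']

variable (K M)

/-- The completed scalar action as a continuous bilinear map. -/
noncomputable def hatSmulL : Completion K →L[K] M →L[K] M :=
  LinearMap.mkContinuous₂
    (LinearMap.mk₂ K (fun c m => hatSmul K M m c)
      (fun c c' m => (hatSmul K M m).map_add c c')
      (fun k c m => (hatSmul K M m).map_smul k c)
      (fun c m m' => hatSmul_add m m' c)
      (fun k' c m => hatSmul_smulK k' m c))
    1 (fun c m => by simpa using hatSmul_norm m c)

variable {K M}

theorem hatSmulL_apply (c : Completion K) (m : M) : hatSmulL K M c m = hatSmul K M m c := rfl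

theorem hatSmulL_coe (k : K) (m : M) : hatSmulL K M (k : Completion K) m = k • m :=
  hatSmul_coe m k

theorem hatSmulL_cont2 : Continuous fun p : Completion K × M => hatSmulL K M p.1 p.2 :=
  (hatSmulL K M).continuous₂

theorem hatSmulL_mul_coe (c : Completion K) (l : K) (m : M) :
    hatSmulL K M (c * (l : Completion K)) m
      = hatSmulL K M c (hatSmulL K M (l : Completion K) m) := by
  refine Completion.induction_on c (isClosed_eq
    (((hatSmulL K M).flip m).continuous.comp (continuous_mul_right _))
    (((hatSmulL K M).flip (hatSmulL K M (l : Completion K) m)).continuous)) fun k => ?_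
  rw [← Completion.coe_mul, hatSmulL_coe, hatSmulL_coe, hatSmulL_coe, mul_smul]

theorem hatSmulL_mul (c d : Completion K) (m : M) :
    hatSmulL K M (c * d) m = hatSmulL K M c (hatSmulL K M d m) := by
  refine Completion.induction_on d (isClosed_eq
    (((hatSmulL K M).flip m).continuous.comp (continuous_mul_left _))
    ((hatSmulL K M c).continuous.comp ((hatSmulL K M).flip m).continuous)) fun l => ?_
  exact hatSmulL_mul_coe c l m

theorem hatSmulL_one (m : M) : hatSmulL K M 1 m = m := by
  rw [show (1 : Completion K) = ((1 : K) : Completion K) from (Completion.coe_one K).symm,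
    hatSmulL_coe, one_smul]

variable (K M)

/-- The module structure over the completion of `K` on a complete normed `K`-space. -/
noncomputable def hatModule : Module (Completion K) M where
  smul c m := hatSmulL K M c m
  one_smul m := hatSmulL_one m
  mul_smul c d m := hatSmulL_mul c d m
  smul_zero c := (hatSmulL K M c).map_zero
  smul_add c m m' := (hatSmulL K M c).map_add m m'
  add_smul c d m := by
    show hatSmulL K M (c + d) m = hatSmulL K M c m + hatSmulL K M d m
    rw [map_add]; rfl
  zero_smul m := by
    show hatSmulL K M (0 : Completion K) m = 0
    rw [map_zero]; rfl

end Hat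


/-- Let `f : V₁ → V₂` and `g : W₁ → W₂` be strictly completely
continuous bounded `K`-linear maps of `K`-Banach spaces.  Then
`f ⊗̂ g : V₁ ⊗̂_K W₁ → V₂ ⊗̂_K W₂` is also strictly completely continuous.  The
completed tensor products are modelled by Banach spaces `T₁`, `T₂` receiving
bounded bilinear maps with dense span, together with the functorial lift
`(a, b) ↦ a ⊗̂ b` on bounded maps satisfying `‖a ⊗̂ b‖ ≤ ‖a‖·‖b‖`. -/
theorem scc_completed_tensor_product
    (K V₁ V₂ W₁ W₂ T₁ T₂ : Type) [NontriviallyNormedField K]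
    [NormedAddCommGroup V₁] [NormedSpace K V₁] [CompleteSpace V₁]
    [NormedAddCommGroup V₂] [NormedSpace K V₂] [CompleteSpace V₂]
    [NormedAddCommGroup W₁] [NormedSpace K W₁] [CompleteSpace W₁]
    [NormedAddCommGroup W₂] [NormedSpace K W₂] [CompleteSpace W₂]
    [NormedAddCommGroup T₁] [NormedSpace K T₁] [CompleteSpace T₁]
    [NormedAddCommGroup T₂] [NormedSpace K T₂] [CompleteSpace T₂]
    (bil₁ : V₁ →L[K] W₁ →L[K] T₁) (bil₂ : V₂ →L[K] W₂ →L[K] T₂)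
    -- `T₁` is the completed tensor product: pure tensors span a dense subspace
    (hdense₁ : Dense ((Submodule.span K
      {x : T₁ | ∃ (v : V₁) (w : W₁), x = bil₁ v w} : Submodule K T₁) : Set T₁))
    -- the functorial lift `(a, b) ↦ a ⊗̂ b` of pairs of bounded maps
    (lift : (V₁ →L[K] V₂) →ₗ[K] (W₁ →L[K] W₂) →ₗ[K] (T₁ →L[K] T₂))
    (hlift : ∀ (a : V₁ →L[K] V₂) (b : W₁ →L[K] W₂) (v : V₁) (w : W₁),
      lift a b (bil₁ v w) = bil₂ (a v) (b w))
    (hnorm : ∀ (a : V₁ →L[K] V₂) (b : W₁ →L[K] W₂), ‖lift a b‖ ≤ ‖a‖ * ‖b‖)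
    (f : V₁ →L[K] V₂) (g : W₁ →L[K] W₂)
    (hf : IsSCC f) (hg : IsSCC g) :
    IsSCC (lift f g) := by
  intro ε hε
  obtain ⟨f', hf'fin, hf'⟩ := hf (ε / (2 * (‖g‖ + 1))) (by positivity)
  obtain ⟨g', hg'fin, hg'⟩ := hg (ε / (2 * (‖f'‖ + 1))) (by positivity)
  refine ⟨lift f' g', ?_, ?_⟩
  · -- finite rank
    by_cases hf0 : f' = 0
    · subst hf0
      have h0 : lift (0 : V₁ →L[K] V₂) g' = 0 := by
        rw [map_zero]; rfl
      rw [h0]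
      rw [show ((0 : T₁ →L[K] T₂) : T₁ →ₗ[K] T₂) = 0 from rfl, LinearMap.range_zero]
      infer_instance
    · obtain ⟨v₀, hv₀⟩ : ∃ v₀, f' v₀ ≠ 0 := by
        by_contra h
        push_neg at h
        exact hf0 (ContinuousLinearMap.ext fun v => by simp [h v])
      letI : CompletableTopField K := myCompletableTopField K
      letI : NontriviallyNormedField (UniformSpace.Completion K) :=
        { (inferInstance : NormedField (UniformSpace.Completion K)) with
          non_trivial := by
            obtain ⟨k, hk⟩ := NormedField.exists_one_lt_norm K
            exact ⟨(k : UniformSpace.Completion K), by rwa [Completion.norm_coe]⟩ }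
      letI : Module (UniformSpace.Completion K) V₁ := hatModule K V₁
      letI : Module (UniformSpace.Completion K) V₂ := hatModule K V₂
      letI : Module (UniformSpace.Completion K) T₂ := hatModule K T₂
      letI : NormedSpace (UniformSpace.Completion K) V₁ := ⟨fun c x => by
        change ‖hatSmulL K V₁ c x‖ ≤ _
        exact hatSmul_norm x c⟩
      letI : NormedSpace (UniformSpace.Completion K) V₂ := ⟨fun c x => by
        change ‖hatSmulL K V₂ c x‖ ≤ _
        exact hatSmul_norm x c⟩
      letI : NormedSpace (UniformSpace.Completion K) T₂ := ⟨fun c x => by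
        change ‖hatSmulL K T₂ c x‖ ≤ _
        exact hatSmul_norm x c⟩
      letI : IsScalarTower K (UniformSpace.Completion K) T₂ := ⟨fun k c x => by
        change hatSmulL K T₂ (k • c) x = k • hatSmulL K T₂ c x
        rw [map_smul]
        rfl⟩
      -- the completion embeds into the finite-dimensional range of `f'`
      have key : ∀ c : UniformSpace.Completion K,
          hatSmulL K V₂ c (f' v₀) = f' (hatSmulL K V₁ c v₀) := by
        intro c
        refine Completion.induction_on c (isClosed_eq
          ((hatSmulL K V₂).flip (f' v₀)).continuous
          (f'.continuous.comp ((hatSmulL K V₁).flip v₀).continuous)) fun k => ?_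
        rw [hatSmulL_coe, hatSmulL_coe, map_smul]
      haveI : FiniteDimensional K (UniformSpace.Completion K) := by
        refine FiniteDimensional.of_injective (LinearMap.codRestrict
          (LinearMap.range (f' : V₁ →ₗ[K] V₂))
          (((hatSmulL K V₂).flip (f' v₀)).toLinearMap) (fun c => by
            rw [ContinuousLinearMap.coe_coe, ContinuousLinearMap.flip_apply, key c]
            exact LinearMap.mem_range_self _ _)) ?_
        rw [← LinearMap.ker_eq_bot, LinearMap.ker_eq_bot']
        intro c hc
        have hc' : hatSmulL K V₂ c (f' v₀) = 0 := by
          have := congrArg Subtype.val hc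
          simpa using this
        by_contra hc0
        apply hv₀
        calc f' v₀ = hatSmulL K V₂ 1 (f' v₀) := (hatSmulL_one _).symm
          _ = hatSmulL K V₂ (c⁻¹ * c) (f' v₀) := by rw [inv_mul_cancel₀ hc0]
          _ = hatSmulL K V₂ c⁻¹ (hatSmulL K V₂ c (f' v₀)) := hatSmulL_mul _ _ _
          _ = 0 := by rw [hc']; exact (hatSmulL K V₂ c⁻¹).map_zero
      -- the span of the image tensors over the completion
      set B : V₂ →ₗ[K] W₂ →ₗ[K] T₂ :=
        (ContinuousLinearMap.coeLM K).comp (bil₂ : V₂ →ₗ[K] (W₂ →L[K] T₂)) with hB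
      set S : Submodule K T₂ :=
        Submodule.map₂ B (LinearMap.range (f' : V₁ →ₗ[K] V₂))
          (LinearMap.range (g' : W₁ →ₗ[K] W₂)) with hS
      obtain ⟨s, hs⟩ : S.FG := Submodule.FG.map₂ _
        (Module.Finite.iff_fg.mp hf'fin) (Module.Finite.iff_fg.mp hg'fin)
      set S' : Submodule (UniformSpace.Completion K) T₂ :=
        Submodule.span (UniformSpace.Completion K) (S : Set T₂) with hS'
      haveI hS'fin : FiniteDimensional (UniformSpace.Completion K) S' := by
        have : S' = Submodule.span (UniformSpace.Completion K) (s : Set T₂) := by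
          rw [hS', ← hs, Submodule.span_span_of_tower]
        rw [this]
        exact FiniteDimensional.span_of_finite _ s.finite_toSet
      have hS'closed : IsClosed ((S' : Submodule (UniformSpace.Completion K) T₂) : Set T₂) :=
        S'.closed_of_finiteDimensional
      -- range of the lifted map is contained in S'
      set N : Submodule K T₂ := S'.restrictScalars K with hN
      have hNset : (N : Set T₂) = (S' : Set T₂) := rfl
      have hcomap : Submodule.comap ((lift f' g' : T₁ →L[K] T₂) : T₁ →ₗ[K] T₂) N = ⊤ := by
        have hsub : (Submodule.span K
            {x : T₁ | ∃ (v : V₁) (w : W₁), x = bil₁ v w} : Submodule K T₁) ≤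
            Submodule.comap ((lift f' g' : T₁ →L[K] T₂) : T₁ →ₗ[K] T₂) N := by
          rw [Submodule.span_le]
          rintro x ⟨v, w, rfl⟩
          simp only [Set.mem_setOf_eq, SetLike.mem_coe, Submodule.mem_comap,
            ContinuousLinearMap.coe_coe, hlift]
          refine (Submodule.restrictScalars_mem K S' _).mpr (Submodule.subset_span ?_)
          exact Submodule.apply_mem_map₂ B (LinearMap.mem_range_self _ v)
            (LinearMap.mem_range_self _ w)
        have hclosed : IsClosed ((Submodule.comap
            ((lift f' g' : T₁ →L[K] T₂) : T₁ →ₗ[K] T₂) N : Submodule K T₁) : Set T₁) :=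
          hS'closed.preimage (lift f' g').continuous
        have hdense' : Dense ((Submodule.comap
            ((lift f' g' : T₁ →L[K] T₂) : T₁ →ₗ[K] T₂) N : Submodule K T₁) : Set T₁) :=
          hdense₁.mono hsub
        have huniv : ((Submodule.comap
            ((lift f' g' : T₁ →L[K] T₂) : T₁ →ₗ[K] T₂) N : Submodule K T₁) : Set T₁)
            = Set.univ := by
          rw [← hclosed.closure_eq, hdense'.closure_eq]
        exact Submodule.eq_top_iff'.mpr fun x => by
          have hx := huniv ▸ Set.mem_univ x
          exact hx
      have hrange : LinearMap.range ((lift f' g' : T₁ →L[K] T₂) : T₁ →ₗ[K] T₂) ≤ N := by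
        rintro y ⟨x, rfl⟩
        have hx : x ∈ Submodule.comap ((lift f' g' : T₁ →L[K] T₂) : T₁ →ₗ[K] T₂) N := by
          rw [hcomap]; trivial
        exact hx
      haveI : FiniteDimensional K N := by
        haveI h1 : Module.Finite (UniformSpace.Completion K) S' := hS'fin
        haveI h2 : Module.Finite K ↥S' := Module.Finite.trans (UniformSpace.Completion K) ↥S'
        exact Module.Finite.equiv
          ({ toFun := fun x => ⟨x.1, x.2⟩
             invFun := fun x => ⟨x.1, x.2⟩
             map_add' := fun _ _ => rfl
             map_smul' := fun _ _ => rfl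
             left_inv := fun _ => rfl
             right_inv := fun _ => rfl } : ↥S' ≃ₗ[K] ↥N)
      exact Submodule.finiteDimensional_of_le hrange
  · -- norm bound
    have hsplit : lift f g - lift f' g' = lift (f - f') g + lift f' (g - g') := by
      simp only [map_sub, LinearMap.sub_apply]
      abel
    have e1 : ε / (2 * (‖g‖ + 1)) * ‖g‖ ≤ ε / 2 := by
      rw [div_mul_eq_mul_div, div_le_div_iff₀ (by positivity) (by norm_num)]
      nlinarith [norm_nonneg g, hε.le]
    have e2 : ‖f'‖ * (ε / (2 * (‖f'‖ + 1))) ≤ ε / 2 := by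
      rw [mul_div_assoc', div_le_div_iff₀ (by positivity) (by norm_num)]
      nlinarith [norm_nonneg f', hε.le]
    rw [hsplit]
    calc ‖lift (f - f') g + lift f' (g - g')‖
        ≤ ‖lift (f - f') g‖ + ‖lift f' (g - g')‖ := norm_add_le _ _
      _ ≤ ‖f - f'‖ * ‖g‖ + ‖f'‖ * ‖g - g'‖ :=
          add_le_add (hnorm _ _) (hnorm _ _)
      _ ≤ (ε / (2 * (‖g‖ + 1))) * ‖g‖ + ‖f'‖ * (ε / (2 * (‖f'‖ + 1))) := by
          gcongr <;> positivity
      _ ≤ ε / 2 + ε / 2 := add_le_add e1 e2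
      _ = ε := by ring
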